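/- Let M be a commutative unital magma with cancellation, f : [0,∞) → M injective and g : [0,∞) → [0,∞) satisfy f(s + g(s)·t) = f(s) + f(t) for all s,t ≥ 0. If g(1) ≠ 1, then with α := g(1)−1 > 0 we have g(s) = αs + 1 for all s ≥ 0, and there exists an injective additive function a : [0,∞) → M such that f(s) = a(log(αs+1)) for all s ≥ 0. -/

import Mathlib

/-- for injective f with g(1) ≠ 1, g(s) = αs+1 with α := g(1)-1 > 0 and
f(s) = a(log(αs+1)) for an injective additive a : [0,∞) → M. -/
theorem stmt7 {M : Type*} (add : M → M → M) (zero : M)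
    (hcomm : ∀ a b : M, add a b = add b a)
    (hzl : ∀ a : M, add zero a = a) (hzr : ∀ a : M, add a zero = a)
    (cancl : ∀ a b c : M, add a b = add a c → b = c)
    (cancr : ∀ a b c : M, add b a = add c a → b = c)
    (f : ℝ → M) (g : ℝ → ℝ)
    (hgnn : ∀ s : ℝ, 0 ≤ s → 0 ≤ g s)
    (hfinj : ∀ s t : ℝ, 0 ≤ s → 0 ≤ t → f s = f t → s = t)
    (heq : ∀ s t : ℝ, 0 ≤ s → 0 ≤ t → f (s + g s * t) = add (f s) (f t))
    (hg1 : g 1 ≠ 1) :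
    0 < g 1 - 1 ∧
    (∀ s : ℝ, 0 ≤ s → g s = (g 1 - 1) * s + 1) ∧
    ∃ a : ℝ → M,
      (∀ x y : ℝ, 0 ≤ x → 0 ≤ y → a x = a y → x = y) ∧
      (∀ x y : ℝ, 0 ≤ x → 0 ≤ y → a (x + y) = add (a x) (a y)) ∧
      (∀ s : ℝ, 0 ≤ s → f s = a (Real.log ((g 1 - 1) * s + 1))) := by
  set α := g 1 - 1 with hα
  -- symmetry equation
  have hsym : ∀ s t : ℝ, 0 ≤ s → 0 ≤ t → s + g s * t = t + g t * s := by
    intro s t hs ht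
    apply hfinj _ _ (add_nonneg hs (mul_nonneg (hgnn s hs) ht))
      (add_nonneg ht (mul_nonneg (hgnn t ht) hs))
    rw [heq s t hs ht, heq t s ht hs, hcomm]
  have hg : ∀ s : ℝ, 0 ≤ s → g s = α * s + 1 := by
    intro s hs
    have := hsym s 1 hs zero_le_one
    rw [hα]; nlinarith [this]
  have hαpos : 0 < α := by
    rcases lt_trichotomy α 0 with h | h | h
    · exfalso
      have hs : (0:ℝ) ≤ (-2) / α := div_nonneg_of_nonpos (by norm_num) h.le
      have h1 := hgnn _ hs
      rw [hg _ hs] at h1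
      have h2 : (-2) / α * α = -2 := div_mul_cancel₀ _ (ne_of_lt h)
      nlinarith
    · exact absurd (by rw [hα] at h; linarith : g 1 = 1) hg1
    · exact h
  refine ⟨hαpos, hg, fun x => f ((Real.exp x - 1) / α), ?_, ?_, ?_⟩
  · intro x y hx hy hxy
    have hxn : (0:ℝ) ≤ (Real.exp x - 1) / α :=
      div_nonneg (by linarith [Real.one_le_exp hx]) hαpos.le
    have hyn : (0:ℝ) ≤ (Real.exp y - 1) / α :=
      div_nonneg (by linarith [Real.one_le_exp hy]) hαpos.le
    have h := hfinj _ _ hxn hyn hxy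
    field_simp at h
    exact Real.exp_injective (by linarith)
  · intro x y hx hy
    set s := (Real.exp x - 1) / α with hsdef
    set t := (Real.exp y - 1) / α with htdef
    have hs : 0 ≤ s := div_nonneg (by linarith [Real.one_le_exp hx]) hαpos.le
    have ht : 0 ≤ t := div_nonneg (by linarith [Real.one_le_exp hy]) hαpos.le
    have key : (Real.exp (x + y) - 1) / α = s + g s * t := by
      rw [hg s hs, hsdef, htdef, Real.exp_add]
      field_simp
      ring
    show f ((Real.exp (x + y) - 1) / α) = add (f s) (f t)
    rw [key, heq s t hs ht]
  · intro s hs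
    have hpos : 0 < α * s + 1 := by positivity
    have : (Real.exp (Real.log (α * s + 1)) - 1) / α = s := by
      rw [Real.exp_log hpos]
      field_simp
      ring
    show f s = f ((Real.exp (Real.log (α * s + 1)) - 1) / α)
    rw [this]
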